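/- Let γ ∈ (0,1] and let m₁, m₂ ∈ ℝ satisfy m₁ ≥ 8π, m₂ ≥ 8π/γ, and (m₁ − m₂)² = 8π(m₁ + m₂/γ). Then m₁ + γ·m₂ ≥ 16π(1 + γ). -/

import Mathlib

open Real

/-- lower bound m₁ + γ·m₂ ≥ 16π(1+γ) for blow-up masses. -/
theorem stmt_1 (γ m₁ m₂ : ℝ) (hγ : γ ∈ Set.Ioc (0:ℝ) 1)
    (h₁ : m₁ ≥ 8 * π) (h₂ : m₂ ≥ 8 * π / γ)
    (hq : (m₁ - m₂) ^ 2 = 8 * π * (m₁ + m₂ / γ)) :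
    m₁ + γ * m₂ ≥ 16 * π * (1 + γ) := by
  obtain ⟨hγ0, hγ1⟩ := hγ
  have hπ : (0:ℝ) < π := Real.pi_pos
  have h₂' : γ * m₂ ≥ 8 * π := by
    have := (div_le_iff₀ hγ0).mp h₂
    linarith
  have hq' : γ ^ 2 * (m₁ - m₂) ^ 2 = 8 * π * γ ^ 2 * m₁ + 8 * π * γ * m₂ := by
    have h := congrArg (fun x => γ ^ 2 * x) hq
    rw [h]
    field_simp
  nlinarith [sq_nonneg (γ * (m₁ - m₂) + 8 * π * γ + 8 * π),
    mul_nonneg (sub_nonneg.mpr h₁) (sub_nonneg.mpr h₂'),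
    mul_nonneg (mul_nonneg (sub_nonneg.mpr h₁) hγ0.le) hγ0.le,
    mul_nonneg (sub_nonneg.mpr h₂') hγ0.le,
    mul_nonneg (sub_nonneg.mpr h₂') (sub_nonneg.mpr hγ1),
    mul_nonneg (mul_nonneg (sub_nonneg.mpr h₁) hγ0.le) (sub_nonneg.mpr hγ1),
    mul_pos hπ hγ0, mul_pos (mul_pos hπ hπ) hγ0, hπ.le,
    mul_nonneg (mul_nonneg hπ.le hγ0.le) (sub_nonneg.mpr hγ1)]
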